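/- There exists a unique group homomorphism x ↦ θ_x from the lattice X into the group of units of the affine Hecke algebra H_Λ such that θ_x = N_x for all dominant x ∈ X^+. Explicitly, θ_x = N_y N_z^{-1} for any decomposition x = y − z with y, z ∈ X^+, and this is independent of the choice of decomposition. -/
import Mathlib


/-- There is a unique group homomorphism `x ↦ θ_x` from the lattice `X` into the units
of the affine Hecke algebra such that `θ_x = N_x` for all dominant `x ∈ X⁺`; explicitly
`θ_x = N_y N_z⁻¹` for any decomposition `x = y - z` with `y, z ∈ X⁺` (expressed here as
`θ_x * N_z = N_y`), independently of the chosen decomposition. -/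
theorem stmt2 {H X : Type*} [Ring H] [AddCommGroup X]
    (Xplus : AddSubmonoid X) (N : X → H)
    (hmul : ∀ x ∈ Xplus, ∀ y ∈ Xplus, N (x + y) = N x * N y)
    (hone : N 0 = 1)
    (hunit : ∀ x ∈ Xplus, IsUnit (N x))
    (hspan : ∀ x : X, ∃ y z : X, y ∈ Xplus ∧ z ∈ Xplus ∧ x = y - z) :
    ∃ θ : X → Hˣ,
      ((∀ x y : X, θ (x + y) = θ x * θ y) ∧
       (∀ x ∈ Xplus, (θ x : H) = N x) ∧
       (∀ x y z : X, y ∈ Xplus → z ∈ Xplus → x = y - z → (θ x : H) * N z = N y)) ∧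
      (∀ θ' : X → Hˣ,
        ((∀ x y : X, θ' (x + y) = θ' x * θ' y) ∧ (∀ x ∈ Xplus, (θ' x : H) = N x)) →
          θ' = θ) := by
  classical
  set u : X → Hˣ := fun x => if h : x ∈ Xplus then (hunit x h).unit else 1 with hu_def
  have hu : ∀ x ∈ Xplus, (u x : H) = N x := by
    intro x hx
    simp [hu_def, hx]
  have humul : ∀ x ∈ Xplus, ∀ y ∈ Xplus, u (x + y) = u x * u y := by
    intro x hx y hy
    apply Units.ext
    rw [Units.val_mul, hu _ (Xplus.add_mem hx hy), hu _ hx, hu _ hy, hmul x hx y hy]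
  have hcomm : ∀ x ∈ Xplus, ∀ y ∈ Xplus, Commute (u x) (u y) := by
    intro x hx y hy
    have h : u (x + y) = u (y + x) := by rw [add_comm]
    rw [humul x hx y hy, humul y hy x hx] at h
    exact h
  have huzero : u 0 = 1 := by
    apply Units.ext
    rw [hu 0 Xplus.zero_mem, hone, Units.val_one]
  have key : ∀ y ∈ Xplus, ∀ z ∈ Xplus, ∀ y' ∈ Xplus, ∀ z' ∈ Xplus,
      y - z = y' - z' → u y * (u z)⁻¹ = u y' * (u z')⁻¹ := by
    intro y hy z hz y' hy' z' hz' h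
    have hsum : y + z' = y' + z := by
      rw [sub_eq_sub_iff_add_eq_add] at h
      exact h
    have h2 : u y * u z' = u y' * u z := by
      rw [← humul y hy z' hz', ← humul y' hy' z hz, hsum]
    have c' : u z * (u z')⁻¹ = (u z')⁻¹ * u z := ((hcomm z hz z' hz').inv_right).eq
    have hy2 : u y = u y' * u z * (u z')⁻¹ := eq_mul_inv_of_mul_eq h2
    rw [hy2, mul_assoc (u y'), c', ← mul_assoc, mul_assoc, mul_inv_cancel, mul_one]
  choose y0 z0 hy0 hz0 hxyz using hspan
  set θ : X → Hˣ := fun x => u (y0 x) * (u (z0 x))⁻¹ with hθ_def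
  have hθ : ∀ x y z : X, y ∈ Xplus → z ∈ Xplus → x = y - z →
      θ x = u y * (u z)⁻¹ := by
    intro x y z hy hz h
    exact key (y0 x) (hy0 x) (z0 x) (hz0 x) y hy z hz (by rw [← hxyz x, ← h])
  have hadd : ∀ x y : X, θ (x + y) = θ x * θ y := by
    intro a b
    have h1 : θ (a + b) = u (y0 a + y0 b) * (u (z0 a + z0 b))⁻¹ := by
      apply hθ _ _ _ (Xplus.add_mem (hy0 a) (hy0 b)) (Xplus.add_mem (hz0 a) (hz0 b))
      have h2 : (y0 a + y0 b) - (z0 a + z0 b) = (y0 a - z0 a) + (y0 b - z0 b) := by abel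
      rw [h2, ← hxyz a, ← hxyz b]
    rw [h1, humul _ (hy0 a) _ (hy0 b), humul _ (hz0 a) _ (hz0 b), mul_inv_rev]
    have c : Commute (u (y0 b) * (u (z0 b))⁻¹) (u (z0 a))⁻¹ :=
      Commute.mul_left ((hcomm _ (hy0 b) _ (hz0 a)).inv_right)
        (((hcomm _ (hz0 b) _ (hz0 a)).inv_left).inv_right)
    show u (y0 a) * u (y0 b) * ((u (z0 b))⁻¹ * (u (z0 a))⁻¹)
        = u (y0 a) * (u (z0 a))⁻¹ * (u (y0 b) * (u (z0 b))⁻¹)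
    rw [mul_assoc (u (y0 a)) ((u (z0 a))⁻¹), ← c.eq]
    group
  have hcoe : ∀ x ∈ Xplus, (θ x : H) = N x := by
    intro x hx
    have := hθ x x 0 hx Xplus.zero_mem (by rw [sub_zero])
    rw [this, huzero, inv_one, mul_one, hu x hx]
  refine ⟨θ, ⟨hadd, hcoe, ?_⟩, ?_⟩
  · intro x y z hy hz h
    rw [hθ x y z hy hz h, ← hu z hz, Units.val_mul, mul_assoc, ← Units.val_mul,
      inv_mul_cancel, Units.val_one, mul_one, hu y hy]
  · rintro θ' ⟨hadd', hcoe'⟩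
    funext x
    have hθ'u : ∀ w ∈ Xplus, θ' w = u w := by
      intro w hw
      apply Units.ext
      rw [hcoe' w hw, hu w hw]
    have h1 : θ' x * θ' (z0 x) = θ' (y0 x) := by
      rw [← hadd', eq_sub_iff_add_eq.mp (hxyz x)]
    rw [hθ'u _ (hz0 x), hθ'u _ (hy0 x)] at h1
    have : θ' x = u (y0 x) * (u (z0 x))⁻¹ := eq_mul_inv_of_mul_eq h1
    rw [this, hθ_def]
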